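/- Let k be a field of characteristic ℓ ≠ 2, G a finite group, ρ : G → GL₂(k) absolutely irreducible, χ : G → k^× a character of even order such that for all g with χ(g) ≠ 1 the eigenvalues of ρ(g) are {α, χ(g)α}. Let Z = {g ∈ G : ρ(g) is scalar} and H = ker χ. Then H/Z is an abelian group. -/

import Mathlib

open Matrix Polynomial

/-- `ρ` is absolutely irreducible: the matrices in the image of `ρ` span the full
matrix algebra `M₂(k)` (Burnside's criterion). -/
def AbsIrred {k G : Type*} [Field k] [Group G]
    (ρ : G →* GL (Fin 2) k) : Prop :=
  Submodule.span k {m : Matrix (Fin 2) (Fin 2) k | ∃ g : G, m = (ρ g).val} = ⊤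

/-- With `k` of characteristic `ℓ ≠ 2`, `G` finite, `ρ : G → GL₂(k)`
absolutely irreducible and `χ : G → kˣ` of even order such that for all `g` with
`χ g ≠ 1` the eigenvalues of `ρ g` are `{α, χ g • α}`, let
`Z = {g : ρ g is scalar}` and `H = ker χ`.  Then `H/Z` is abelian, i.e. the image
under `ρ` of every commutator of elements of `H` is a scalar matrix. -/
theorem stmt1 {k G : Type*} [Field k] [Group G] [Finite G]
    (ℓ : ℕ) [CharP k ℓ] (hℓ : ℓ ≠ 2)
    (ρ : G →* GL (Fin 2) k) (habs : AbsIrred ρ)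
    (χ : G →* kˣ) (hχeven : Even (orderOf χ)) (hχpos : 0 < orderOf χ)
    (heig : ∀ g : G, χ g ≠ 1 → ∃ α : k,
      ((ρ g).val).charpoly = (X - C α) * (X - C ((χ g : k) * α))) :
    ∀ h₁ ∈ χ.ker, ∀ h₂ ∈ χ.ker, ∃ c : k,
      (ρ (h₁ * h₂ * h₁⁻¹ * h₂⁻¹)).val = c • (1 : Matrix (Fin 2) (Fin 2) k) := by
  intro h₁ hh₁ h₂ hh₂
  -- characteristic ≠ 2 facts
  have htwo : (2 : k) ≠ 0 := by
    intro h2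
    have hdvd : ℓ ∣ 2 := (CharP.cast_eq_zero_iff k ℓ 2).mp (by exact_mod_cast h2)
    rcases CharP.char_is_prime_or_zero k ℓ with hp | h0
    · exact hℓ ((Nat.prime_dvd_prime_iff_eq hp Nat.prime_two).mp hdvd)
    · rw [h0] at hdvd
      exact absurd hdvd (by norm_num)
  have hne : (-1 : kˣ) ≠ 1 := by
    intro h
    have h' : (-1 : k) = 1 := by
      have := congrArg (Units.val) h
      simpa using this
    exact htwo (by linear_combination -h')
  -- find g₀ with χ g₀ = -1
  obtain ⟨g₀, hg₀⟩ : ∃ g₀ : G, χ g₀ = -1 := by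
    have h2n : 2 ∣ orderOf χ := hχeven.two_dvd
    obtain ⟨m, hm2⟩ : ∃ m, m * 2 = orderOf χ := ⟨_, Nat.div_mul_cancel h2n⟩
    have hpow : χ ^ m ≠ 1 := pow_ne_one_of_lt_orderOf (x := χ) (n := m) (by rintro rfl; rw [zero_mul] at hm2; omega) (by omega)
    obtain ⟨g, hg⟩ : ∃ g : G, (χ ^ m) g ≠ 1 := by
      by_contra hc
      push_neg at hc
      exact hpow (MonoidHom.ext fun g => hc g)
    refine ⟨g ^ m, ?_⟩
    have hval : χ (g ^ m) = (χ ^ m) g := by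
      rw [MonoidHom.pow_apply, map_pow]
    have hsq : (χ (g ^ m)) ^ 2 = 1 := by
      rw [hval, MonoidHom.pow_apply, ← pow_mul, ← MonoidHom.pow_apply, hm2,
        pow_orderOf_eq_one χ]
      rfl
    have hne1 : χ (g ^ m) ≠ 1 := by rw [hval]; exact hg
    have hk : (χ (g ^ m) : k) * (χ (g ^ m) : k) = 1 := by
      have := congrArg (Units.val) hsq
      push_cast at this
      rw [sq] at this
      exact_mod_cast this
    rcases mul_self_eq_one_iff.mp hk with h | h
    · exact absurd (Units.ext h) hne1
    · exact Units.ext (by simpa using h)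
  -- key: χ g = -1 implies ρ(g)² is a nonzero scalar
  have key : ∀ g : G, χ g = -1 →
      ∃ b : k, b ≠ 0 ∧ (ρ g).val * (ρ g).val = b • (1 : Matrix (Fin 2) (Fin 2) k) := by
    intro g hg
    obtain ⟨α, hchar⟩ := heig g (by rw [hg]; exact hne)
    have hCH := Matrix.aeval_self_charpoly (ρ g).val
    rw [hchar] at hCH
    have hvalneg : ((χ g : k)) = -1 := by rw [hg]; simp
    rw [hvalneg] at hCH
    set M := (ρ g).val with hM
    set s := algebraMap k (Matrix (Fin 2) (Fin 2) k) α with hs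
    have hCH' : (M - s) * (M + s) = 0 := by
      rw [neg_one_mul] at hCH
      have heval : aeval M ((X - C α) * (X - C (- α))) = (M - s) * (M + s) := by
        rw [_root_.map_mul, map_sub, map_sub, aeval_X, aeval_C, aeval_C, map_neg,
          sub_neg_eq_add, hs]
      rw [heval] at hCH
      exact hCH
    have hcomm : s * M = M * s := Algebra.commutes α M
    have hMM : M * M = (α * α) • (1 : Matrix (Fin 2) (Fin 2) k) := by
      have h0 : M * M - s * s = 0 := by
        linear_combination (norm := noncomm_ring) hCH' + hcomm
      rw [sub_eq_zero] at h0
      rw [h0, hs, ← _root_.map_mul, Algebra.algebraMap_eq_smul_one]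
    refine ⟨α * α, ?_, hMM⟩
    intro hz
    rw [hz, zero_smul] at hMM
    have hu : ((ρ g)⁻¹ * (ρ g)⁻¹ * (ρ g * ρ g) : (Matrix (Fin 2) (Fin 2) k)ˣ) = 1 := by
      group
    have hcontr := congrArg Units.val hu
    simp only [Units.val_mul, Units.val_one] at hcontr
    rw [show ((ρ g : (Matrix (Fin 2) (Fin 2) k)ˣ) : Matrix (Fin 2) (Fin 2) k) * (ρ g : (Matrix (Fin 2) (Fin 2) k)ˣ) = 0 from hMM] at hcontr
    rw [mul_zero] at hcontr
    exact one_ne_zero hcontr.symm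
  -- set up notation
  set σ := (ρ g₀).val with hσ
  set M₁ := (ρ h₁).val with hM₁
  set M₂ := (ρ h₂).val with hM₂
  set N₁ := (ρ h₁⁻¹).val with hN₁
  set N₂ := (ρ h₂⁻¹).val with hN₂
  have inv₁ : M₁ * N₁ = 1 := by
    rw [hM₁, hN₁, ← Units.val_mul, ← _root_.map_mul, mul_inv_cancel, _root_.map_one, Units.val_one]
  have inv₂ : M₂ * N₂ = 1 := by
    rw [hM₂, hN₂, ← Units.val_mul, ← _root_.map_mul, mul_inv_cancel, _root_.map_one, Units.val_one]
  have hχ1 : χ h₁ = 1 := hh₁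
  have hχ2 : χ h₂ = 1 := hh₂
  obtain ⟨a, ha0, hK0⟩ := key g₀ hg₀
  obtain ⟨b₁, hb₁0, hK1⟩ := key (g₀ * h₁) (by rw [_root_.map_mul, hg₀, hχ1, mul_one])
  obtain ⟨b₂, hb₂0, hK2⟩ := key (g₀ * h₂) (by rw [_root_.map_mul, hg₀, hχ2, mul_one])
  obtain ⟨b₃, hb₃0, hK3⟩ := key (g₀ * (h₁ * h₂))
    (by rw [_root_.map_mul, _root_.map_mul, hg₀, hχ1, hχ2, mul_one, mul_one])
  -- rewrite the ρ values of products
  have eK1 : (σ * M₁) * (σ * M₁) = b₁ • (1 : Matrix (Fin 2) (Fin 2) k) := by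
    rw [hσ, hM₁, ← Units.val_mul, ← _root_.map_mul]; exact hK1
  have eK2 : (σ * M₂) * (σ * M₂) = b₂ • (1 : Matrix (Fin 2) (Fin 2) k) := by
    rw [hσ, hM₂, ← Units.val_mul, ← _root_.map_mul]; exact hK2
  have eK3 : (σ * (M₁ * M₂)) * (σ * (M₁ * M₂)) = b₃ • (1 : Matrix (Fin 2) (Fin 2) k) := by
    rw [hσ, hM₁, hM₂, ← Units.val_mul, ← Units.val_mul, ← _root_.map_mul, ← _root_.map_mul]
    exact hK3
  -- P-lemmas : σ * X * σ = b • X⁻¹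
  have P₁ : σ * M₁ * σ = b₁ • N₁ := by
    calc σ * M₁ * σ = σ * M₁ * σ * (M₁ * N₁) := by rw [inv₁, mul_one]
    _ = ((σ * M₁) * (σ * M₁)) * N₁ := by noncomm_ring
    _ = (b₁ • 1) * N₁ := by rw [eK1]
    _ = b₁ • N₁ := by rw [smul_mul_assoc, one_mul]
  have P₂ : σ * M₂ * σ = b₂ • N₂ := by
    calc σ * M₂ * σ = σ * M₂ * σ * (M₂ * N₂) := by rw [inv₂, mul_one]
    _ = ((σ * M₂) * (σ * M₂)) * N₂ := by noncomm_ring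
    _ = (b₂ • 1) * N₂ := by rw [eK2]
    _ = b₂ • N₂ := by rw [smul_mul_assoc, one_mul]
  have inv₃ : (M₁ * M₂) * (N₂ * N₁) = 1 := by
    calc (M₁ * M₂) * (N₂ * N₁) = M₁ * (M₂ * N₂) * N₁ := by noncomm_ring
    _ = 1 := by rw [inv₂, mul_one, inv₁]
  have P₃ : σ * (M₁ * M₂) * σ = b₃ • (N₂ * N₁) := by
    calc σ * (M₁ * M₂) * σ = σ * (M₁ * M₂) * σ * ((M₁ * M₂) * (N₂ * N₁)) := by
          rw [inv₃, mul_one]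
    _ = ((σ * (M₁ * M₂)) * (σ * (M₁ * M₂))) * (N₂ * N₁) := by noncomm_ring
    _ = (b₃ • 1) * (N₂ * N₁) := by rw [eK3]
    _ = b₃ • (N₂ * N₁) := by rw [smul_mul_assoc, one_mul]
  -- the star identity
  have star : (b₁ * b₂) • (N₁ * N₂) = (a * b₃) • (N₂ * N₁) := by
    calc (b₁ * b₂) • (N₁ * N₂) = (b₁ • N₁) * (b₂ • N₂) := by
          rw [smul_mul_assoc, mul_smul_comm, smul_smul]
    _ = (σ * M₁ * σ) * (σ * M₂ * σ) := by rw [P₁, P₂]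
    _ = σ * M₁ * (σ * σ) * M₂ * σ := by noncomm_ring
    _ = σ * M₁ * (a • 1) * M₂ * σ := by rw [hK0]
    _ = a • (σ * (M₁ * M₂) * σ) := by
          rw [mul_smul_comm, smul_mul_assoc, smul_mul_assoc, mul_one]
          congr 1
          noncomm_ring
    _ = a • (b₃ • (N₂ * N₁)) := by rw [P₃]
    _ = (a * b₃) • (N₂ * N₁) := by rw [smul_smul]
  -- conclude
  refine ⟨(a * b₃) / (b₁ * b₂), ?_⟩
  have hb12 : (b₁ * b₂) ≠ 0 := mul_ne_zero hb₁0 hb₂0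
  have hNN : N₁ * N₂ = ((a * b₃) / (b₁ * b₂)) • (N₂ * N₁) := by
    have := congrArg (fun X => (b₁ * b₂)⁻¹ • X) star
    simp only [smul_smul] at this
    rw [inv_mul_cancel₀ hb12, one_smul] at this
    rw [this, div_eq_inv_mul]
  calc (ρ (h₁ * h₂ * h₁⁻¹ * h₂⁻¹)).val
      = M₁ * M₂ * N₁ * N₂ := by
        rw [hM₁, hM₂, hN₁, hN₂, ← Units.val_mul, ← Units.val_mul, ← Units.val_mul,
          ← _root_.map_mul, ← _root_.map_mul, ← _root_.map_mul]
  _ = M₁ * M₂ * (N₁ * N₂) := by rw [mul_assoc]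
  _ = M₁ * M₂ * (((a * b₃) / (b₁ * b₂)) • (N₂ * N₁)) := by rw [hNN]
  _ = ((a * b₃) / (b₁ * b₂)) • (M₁ * (M₂ * N₂) * N₁) := by
        rw [mul_smul_comm]
        congr 1
        noncomm_ring
  _ = ((a * b₃) / (b₁ * b₂)) • (1 : Matrix (Fin 2) (Fin 2) k) := by
        rw [inv₂, mul_one, inv₁]
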